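/- Let N_y = N_x + N_h − 1. Let e : Ω → ℝ^{N_h} be a square-integrable zero-mean random vector with covariance matrix C_ee, and let n : Ω → ℝ^{N_y} be a square-integrable zero-mean random vector with covariance matrix C_nn, independent of e. Let B : Ω → ℝ^{N_y × N_x} be the random linear-convolution error matrix whose i-th column is e(ω) preceded by i−1 zeros and followed by N_x − i zeros. Then for every deterministic x ∈ ℝ^{N_x}, the random vector w = B x + n has zero mean and covariance matrix Cov(w) = P(x) C_{b'_1 b'_1} P(x)^T + C_nn, where P(x) = Σ_{i=1}^{N_x} x_i D^{i−1} with D the N_y × N_y down-shift matrix (D_{k,l} = 1 iff k = l + 1), and C_{b'_1 b'_1} is the N_y × N_y block matrix [[C_ee, 0],[0, 0]]. -/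

import Mathlib

open MeasureTheory ProbabilityTheory Matrix

/-- The `Ny × Ny` down-shift matrix `D` with `D k l = 1` iff `k = l + 1` (0-based). -/
def downShift (Ny : ℕ) : Matrix (Fin Ny) (Fin Ny) ℝ :=
  Matrix.of fun k l => if k.val = l.val + 1 then 1 else 0

/-- The matrix polynomial `P(x) = ∑ i, x i • D^(i-1)` (1-based; 0-based exponent `i`). -/
def Pmat {Nx : ℕ} (Ny : ℕ) (x : Fin Nx → ℝ) : Matrix (Fin Ny) (Fin Ny) ℝ :=
  ∑ i : Fin Nx, x i • (downShift Ny) ^ i.val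

/-- The block matrix `C_{b'_1 b'_1} = [[Cee, 0], [0, 0]]` of size `Ny × Ny`,
`Ny = Nx + Nh - 1`. -/
def Cb1 {Nh : ℕ} (Nx : ℕ) (Cee : Matrix (Fin Nh) (Fin Nh) ℝ) :
    Matrix (Fin (Nx + Nh - 1)) (Fin (Nx + Nh - 1)) ℝ :=
  Matrix.of fun i k =>
    if hi : i.val < Nh then
      (if hk : k.val < Nh then Cee ⟨i.val, hi⟩ ⟨k.val, hk⟩ else 0)
    else 0

lemma downShift_pow (Ny m : ℕ) (k l : Fin Ny) :
    (downShift Ny ^ m) k l = if k.val = l.val + m then 1 else 0 := by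
  induction m generalizing l with
  | zero =>
    simp only [pow_zero, Matrix.one_apply, Nat.add_zero]
    congr 1
    simp [Fin.ext_iff, eq_comm]
  | succ m ih =>
    rw [pow_succ, Matrix.mul_apply]
    by_cases h : l.val + 1 < Ny
    · rw [Finset.sum_eq_single (⟨l.val + 1, h⟩ : Fin Ny)]
      · rw [ih]
        simp only [downShift, Matrix.of_apply, Fin.val_mk]
        norm_num
        split_ifs <;> (first | rfl | omega)
      · intro p _ hp
        simp only [downShift, Matrix.of_apply]
        rw [if_neg, mul_zero]
        intro hc; exact hp (Fin.ext hc)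
      · simp
    · rw [Finset.sum_eq_zero, if_neg (by omega)]
      intro p _
      simp only [downShift, Matrix.of_apply]
      rw [if_neg (by omega), mul_zero]

lemma Pmat_apply {Nx : ℕ} (Ny : ℕ) (x : Fin Nx → ℝ) (i p : Fin Ny) :
    Pmat Ny x i p = ∑ a : Fin Nx, x a * (if i.val = p.val + a.val then 1 else 0) := by
  simp [Pmat, Matrix.sum_apply, downShift_pow]

lemma sum_delta {Ny : ℕ} (i : Fin Ny) (m : ℕ) (f : Fin Ny → ℝ) :
    ∑ p : Fin Ny, (if i.val = p.val + m then (1:ℝ) else 0) * f p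
      = if h : m ≤ i.val then f ⟨i.val - m, Nat.lt_of_le_of_lt (Nat.sub_le _ _) i.isLt⟩
        else 0 := by
  by_cases h : m ≤ i.val
  · rw [dif_pos h, Finset.sum_eq_single (⟨i.val - m, Nat.lt_of_le_of_lt (Nat.sub_le _ _) i.isLt⟩ : Fin Ny)]
    · rw [if_pos (by simp; omega), one_mul]
    · intro p _ hp
      rw [if_neg, zero_mul]
      intro hc
      exact hp (Fin.ext (by simp; omega))
    · simp
  · rw [dif_neg h, Finset.sum_eq_zero]
    intro p _
    rw [if_neg (by omega), zero_mul]

lemma matrix_side {Nh Nx : ℕ} (Cee : Matrix (Fin Nh) (Fin Nh) ℝ) (x : Fin Nx → ℝ)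
    (i k : Fin (Nx + Nh - 1)) :
    (Pmat (Nx + Nh - 1) x * Cb1 Nx Cee * (Pmat (Nx + Nh - 1) x)ᵀ) i k
    = ∑ a : Fin Nx, ∑ b : Fin Nx, x a * x b *
        (if h : a.val ≤ i.val ∧ i.val - a.val < Nh then
          (if h2 : b.val ≤ k.val ∧ k.val - b.val < Nh then
            Cee ⟨i.val - a.val, h.2⟩ ⟨k.val - b.val, h2.2⟩ else 0) else 0) := by
  have hG : ∀ q : Fin (Nx + Nh - 1),
      (Pmat (Nx + Nh - 1) x * Cb1 Nx Cee) i q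
      = ∑ a : Fin Nx, (if h : a.val ≤ i.val then
          x a * Cb1 Nx Cee ⟨i.val - a.val, Nat.lt_of_le_of_lt (Nat.sub_le _ _) i.isLt⟩ q
        else 0) := by
    intro q
    rw [Matrix.mul_apply]
    calc ∑ p, Pmat (Nx + Nh - 1) x i p * Cb1 Nx Cee p q
        = ∑ p, ∑ a : Fin Nx, (if i.val = p.val + a.val then (1:ℝ) else 0) *
            (x a * Cb1 Nx Cee p q) := by
          refine Finset.sum_congr rfl fun p _ => ?_
          rw [Pmat_apply, Finset.sum_mul]
          exact Finset.sum_congr rfl fun a _ => by ring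
      _ = ∑ a : Fin Nx, ∑ p, (if i.val = p.val + a.val then (1:ℝ) else 0) *
            (x a * Cb1 Nx Cee p q) := Finset.sum_comm
      _ = _ := Finset.sum_congr rfl fun a _ =>
          sum_delta i a.val (fun p => x a * Cb1 Nx Cee p q)
  rw [Matrix.mul_apply]
  calc ∑ q, (Pmat (Nx + Nh - 1) x * Cb1 Nx Cee) i q * (Pmat (Nx + Nh - 1) x)ᵀ q k
      = ∑ q, ∑ b : Fin Nx, (if k.val = q.val + b.val then (1:ℝ) else 0) *
          (x b * (Pmat (Nx + Nh - 1) x * Cb1 Nx Cee) i q) := by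
        refine Finset.sum_congr rfl fun q _ => ?_
        rw [Matrix.transpose_apply, Pmat_apply, Finset.mul_sum]
        exact Finset.sum_congr rfl fun b _ => by ring
    _ = ∑ b : Fin Nx, ∑ q, (if k.val = q.val + b.val then (1:ℝ) else 0) *
          (x b * (Pmat (Nx + Nh - 1) x * Cb1 Nx Cee) i q) := Finset.sum_comm
    _ = ∑ b : Fin Nx, (if hb : b.val ≤ k.val then
          x b * (Pmat (Nx + Nh - 1) x * Cb1 Nx Cee) i
            ⟨k.val - b.val, Nat.lt_of_le_of_lt (Nat.sub_le _ _) k.isLt⟩ else 0) :=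
        Finset.sum_congr rfl fun b _ =>
          sum_delta k b.val (fun q => x b * (Pmat (Nx + Nh - 1) x * Cb1 Nx Cee) i q)
    _ = _ := by
        rw [Finset.sum_comm]
        refine Finset.sum_congr rfl fun b _ => ?_
        by_cases hb : b.val ≤ k.val
        · rw [dif_pos hb, hG, Finset.mul_sum]
          refine Finset.sum_congr rfl fun a _ => ?_
          by_cases ha : a.val ≤ i.val
          · rw [dif_pos ha]
            simp only [Cb1, Matrix.of_apply, Fin.val_mk]
            by_cases h1 : i.val - a.val < Nh
            · by_cases h2 : k.val - b.val < Nh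
              · rw [dif_pos h1, dif_pos h2, dif_pos ⟨ha, h1⟩, dif_pos ⟨hb, h2⟩]; ring
              · rw [dif_pos h1, dif_neg h2, dif_pos ⟨ha, h1⟩,
                  dif_neg (fun hc => h2 hc.2)]
                ring
            · rw [dif_neg h1, dif_neg (fun hc => h1 hc.2)]
              ring
          · rw [dif_neg ha, dif_neg (fun hc => ha hc.1)]
            ring
        · rw [dif_neg hb]
          refine (Finset.sum_eq_zero fun a _ => ?_).symm
          by_cases ha : a.val ≤ i.val ∧ i.val - a.val < Nh
          · rw [dif_pos ha, dif_neg (fun hc => hb hc.1), mul_zero]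
          · rw [dif_neg ha, mul_zero]

def Econv {Ω : Type*} {Nh Nx : ℕ} (e : Fin Nh → Ω → ℝ)
    (k : Fin (Nx + Nh - 1)) (a : Fin Nx) (ω : Ω) : ℝ :=
  if h : a.val ≤ k.val ∧ k.val - a.val < Nh then e ⟨k.val - a.val, h.2⟩ ω else 0

/-- with `Ny = Nx + Nh - 1`, let `e` be a square-integrable zero-mean
random vector with covariance `Cee`, let `n` be a square-integrable zero-mean random
vector with covariance `Cnn`, independent of `e`, and let `B(ω)` be the random
linear-convolution error matrix whose `i`-th column is `e(ω)` shifted down by `i - 1`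
positions (1-based). Then for every deterministic `x`, `w = B x + n` has zero mean and
covariance matrix `P(x) * C_{b'_1 b'_1} * P(x)ᵀ + Cnn`. -/
theorem stmt_7
    {Ω : Type*} [MeasurableSpace Ω] {μ : Measure Ω} [IsProbabilityMeasure μ]
    {Nh Nx : ℕ}
    (e : Fin Nh → Ω → ℝ) (Cee : Matrix (Fin Nh) (Fin Nh) ℝ)
    (n : Fin (Nx + Nh - 1) → Ω → ℝ)
    (Cnn : Matrix (Fin (Nx + Nh - 1)) (Fin (Nx + Nh - 1)) ℝ)
    (heL2 : ∀ i, MemLp (e i) 2 μ)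
    (hemean : ∀ i, ∫ ω, e i ω ∂μ = 0)
    (hCee : ∀ i j, ∫ ω, e i ω * e j ω ∂μ = Cee i j)
    (hnL2 : ∀ i, MemLp (n i) 2 μ)
    (hnmean : ∀ i, ∫ ω, n i ω ∂μ = 0)
    (hCnn : ∀ i k, ∫ ω, n i ω * n k ω ∂μ = Cnn i k)
    (hen : IndepFun (fun ω i => e i ω) (fun ω i => n i ω) μ)
    (B : Ω → Matrix (Fin (Nx + Nh - 1)) (Fin Nx) ℝ)
    (hB : ∀ ω k i, B ω k i =
      if h : i.val ≤ k.val ∧ k.val - i.val < Nh then e ⟨k.val - i.val, h.2⟩ ω else 0)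
    (x : Fin Nx → ℝ) :
    (∀ i, ∫ ω, ((B ω).mulVec x i + n i ω) ∂μ = 0) ∧
    (∀ i k, ∫ ω, ((B ω).mulVec x i + n i ω) * ((B ω).mulVec x k + n k ω) ∂μ
      = (Pmat (Nx + Nh - 1) x * Cb1 Nx Cee * (Pmat (Nx + Nh - 1) x)ᵀ + Cnn) i k) := by
  -- product of two L2 functions is integrable
  have hmul : ∀ (f g : Ω → ℝ), MemLp f 2 μ → MemLp g 2 μ →
      Integrable (fun ω => f ω * g ω) μ := by
    intro f g hf hg
    have h : MemLp (g • f) 1 μ := hf.smul hg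
      (hpqr := ⟨by simpa using ENNReal.inv_two_add_inv_two⟩)
    exact (h.integrable le_rfl).congr
      (Filter.Eventually.of_forall fun ω => by simp [mul_comm])
  have hE2 : ∀ (i : Fin (Nx + Nh - 1)) (a : Fin Nx), MemLp (Econv e i a) 2 μ := by
    intro i a
    by_cases h : a.val ≤ i.val ∧ i.val - a.val < Nh
    · have heq : Econv e i a = e ⟨i.val - a.val, h.2⟩ := funext fun ω => dif_pos h
      rw [heq]; exact heL2 _
    · have heq : Econv e i a = fun _ => (0:ℝ) := funext fun ω => dif_neg h
      rw [heq]; exact memLp_const 0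
  have hEmean : ∀ (i : Fin (Nx + Nh - 1)) (a : Fin Nx), ∫ ω, Econv e i a ω ∂μ = 0 := by
    intro i a
    by_cases h : a.val ≤ i.val ∧ i.val - a.val < Nh
    · simpa [Econv, h] using hemean ⟨i.val - a.val, h.2⟩
    · simp [Econv, h]
  have hcross : ∀ (j : Fin Nh) (k : Fin (Nx + Nh - 1)), ∫ ω, e j ω * n k ω ∂μ = 0 := by
    intro j k
    have hind : IndepFun (fun ω => e j ω) (fun ω => n k ω) μ :=
      hen.comp (measurable_pi_apply j) (measurable_pi_apply k)
    have h := hind.integral_mul_eq_mul_integral (heL2 j).aestronglyMeasurable (hnL2 k).aestronglyMeasurable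
    simpa [Pi.mul_apply, hemean j, hnmean k] using h
  have hEn : ∀ (i : Fin (Nx + Nh - 1)) (a : Fin Nx) (k : Fin (Nx + Nh - 1)),
      ∫ ω, Econv e i a ω * n k ω ∂μ = 0 := by
    intro i a k
    by_cases h : a.val ≤ i.val ∧ i.val - a.val < Nh
    · simpa [Econv, h] using hcross ⟨i.val - a.val, h.2⟩ k
    · simp [Econv, h]
  have hEE : ∀ (i : Fin (Nx + Nh - 1)) (a : Fin Nx) (k : Fin (Nx + Nh - 1)) (b : Fin Nx),
      ∫ ω, Econv e i a ω * Econv e k b ω ∂μ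
      = (if h : a.val ≤ i.val ∧ i.val - a.val < Nh then
          (if h2 : b.val ≤ k.val ∧ k.val - b.val < Nh then
            Cee ⟨i.val - a.val, h.2⟩ ⟨k.val - b.val, h2.2⟩ else 0) else 0) := by
    intro i a k b
    by_cases h : a.val ≤ i.val ∧ i.val - a.val < Nh
    · by_cases h2 : b.val ≤ k.val ∧ k.val - b.val < Nh
      · rw [dif_pos h, dif_pos h2]
        simpa [Econv, h, h2] using hCee ⟨i.val - a.val, h.2⟩ ⟨k.val - b.val, h2.2⟩
      · simp [Econv, h, h2]
    · simp [Econv, h]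
  have hkey : ∀ (ω : Ω) (i : Fin (Nx + Nh - 1)),
      (B ω).mulVec x i = ∑ a : Fin Nx, x a * Econv e i a ω := by
    intro ω i
    simp only [Matrix.mulVec, dotProduct]
    refine Finset.sum_congr rfl fun a _ => ?_
    rw [hB, mul_comm]
    rfl
  have hS2 : ∀ i : Fin (Nx + Nh - 1),
      MemLp (fun ω => ∑ a : Fin Nx, x a * Econv e i a ω) 2 μ :=
    fun i => memLp_finset_sum _ fun a _ => (hE2 i a).const_mul (x a)
  constructor
  · intro i
    simp_rw [hkey]
    rw [integral_add ((hS2 i).integrable one_le_two) ((hnL2 i).integrable one_le_two),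
      integral_finset_sum _
        (fun a _ => ((hE2 i a).integrable one_le_two).const_mul (x a))]
    simp [integral_const_mul, hEmean, hnmean]
  · intro i k
    simp_rw [hkey]
    have hInt_SS : Integrable (fun ω =>
        (∑ a : Fin Nx, x a * Econv e i a ω) * (∑ b : Fin Nx, x b * Econv e k b ω)) μ :=
      hmul _ _ (hS2 i) (hS2 k)
    have hInt_Sn : Integrable (fun ω =>
        (∑ a : Fin Nx, x a * Econv e i a ω) * n k ω) μ := hmul _ _ (hS2 i) (hnL2 k)
    have hInt_nS : Integrable (fun ω =>
        n i ω * (∑ b : Fin Nx, x b * Econv e k b ω)) μ := hmul _ _ (hnL2 i) (hS2 k)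
    have hInt_nn : Integrable (fun ω => n i ω * n k ω) μ := hmul _ _ (hnL2 i) (hnL2 k)
    have hexp : ∀ ω : Ω,
        (∑ a : Fin Nx, x a * Econv e i a ω + n i ω) *
          (∑ b : Fin Nx, x b * Econv e k b ω + n k ω)
        = (∑ a : Fin Nx, x a * Econv e i a ω) * (∑ b : Fin Nx, x b * Econv e k b ω) +
          ((∑ a : Fin Nx, x a * Econv e i a ω) * n k ω +
            (n i ω * (∑ b : Fin Nx, x b * Econv e k b ω) + n i ω * n k ω)) :=
      fun ω => by ring
    have h34 : Integrable (fun ω =>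
        n i ω * (∑ b : Fin Nx, x b * Econv e k b ω) + n i ω * n k ω) μ :=
      hInt_nS.add hInt_nn
    have h234 : Integrable (fun ω =>
        (∑ a : Fin Nx, x a * Econv e i a ω) * n k ω +
          (n i ω * (∑ b : Fin Nx, x b * Econv e k b ω) + n i ω * n k ω)) μ :=
      hInt_Sn.add h34
    simp_rw [hexp]
    rw [integral_add hInt_SS h234, integral_add hInt_Sn h34,
      integral_add hInt_nS hInt_nn]
    have hA : ∫ ω, (∑ a : Fin Nx, x a * Econv e i a ω) *
        (∑ b : Fin Nx, x b * Econv e k b ω) ∂μ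
        = ∑ a : Fin Nx, ∑ b : Fin Nx, x a * x b *
          (if h : a.val ≤ i.val ∧ i.val - a.val < Nh then
            (if h2 : b.val ≤ k.val ∧ k.val - b.val < Nh then
              Cee ⟨i.val - a.val, h.2⟩ ⟨k.val - b.val, h2.2⟩ else 0) else 0) := by
      have h1 : ∀ ω : Ω, (∑ a : Fin Nx, x a * Econv e i a ω) *
          (∑ b : Fin Nx, x b * Econv e k b ω)
          = ∑ a : Fin Nx, ∑ b : Fin Nx,
              (x a * x b) * (Econv e i a ω * Econv e k b ω) := by
        intro ω
        rw [Finset.sum_mul_sum]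
        exact Finset.sum_congr rfl fun a _ => Finset.sum_congr rfl fun b _ => by ring
      simp_rw [h1]
      rw [integral_finset_sum _ (fun a _ => integrable_finset_sum _
        (fun b _ => (hmul _ _ (hE2 i a) (hE2 k b)).const_mul _))]
      refine Finset.sum_congr rfl fun a _ => ?_
      rw [integral_finset_sum _ (fun b _ => (hmul _ _ (hE2 i a) (hE2 k b)).const_mul _)]
      refine Finset.sum_congr rfl fun b _ => ?_
      rw [integral_const_mul, hEE]
    have hBn : ∫ ω, (∑ a : Fin Nx, x a * Econv e i a ω) * n k ω ∂μ = 0 := by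
      have h1 : ∀ ω : Ω, (∑ a : Fin Nx, x a * Econv e i a ω) * n k ω
          = ∑ a : Fin Nx, x a * (Econv e i a ω * n k ω) := by
        intro ω
        rw [Finset.sum_mul]
        exact Finset.sum_congr rfl fun a _ => by ring
      simp_rw [h1]
      rw [integral_finset_sum _ (fun a _ => (hmul _ _ (hE2 i a) (hnL2 k)).const_mul _)]
      simp [integral_const_mul, hEn]
    have hnB : ∫ ω, n i ω * (∑ b : Fin Nx, x b * Econv e k b ω) ∂μ = 0 := by
      have h1 : ∀ ω : Ω, n i ω * (∑ b : Fin Nx, x b * Econv e k b ω)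
          = ∑ b : Fin Nx, x b * (Econv e k b ω * n i ω) := by
        intro ω
        rw [Finset.mul_sum]
        exact Finset.sum_congr rfl fun b _ => by ring
      simp_rw [h1]
      rw [integral_finset_sum _ (fun b _ => (hmul _ _ (hE2 k b) (hnL2 i)).const_mul _)]
      simp [integral_const_mul, hEn]
    rw [hA, hBn, hnB, hCnn, Matrix.add_apply, matrix_side]
    ring
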